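/- Let d ≥ 3 and define u₁,...,u_d in ℂ^d as in the construction (with a = sqrt(d/(2(d-1)²)), b = sqrt((d-2)/(4(d-1))); for 1 ≤ i ≤ d-2, uᵢ = Σ_{j≠i} a·φⱼ + i·b·φ_{i+1} − i·b·φ_{i+2}; u_{d-1} = Σ_{j≠d-1} a·φⱼ + i·b·φ_d − i·b·φ₁; u_d = Σ_{j≠d} a·φⱼ + b·φ₁ − b·φ₂). Let α = (1/√d)·Σⱼ φⱼ and define tᵢ = uᵢ − ⟨α|uᵢ⟩·α. Then t₁,...,t_d are linearly independent over ℝ (viewing ℂ^d as a real vector space). -/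

import Mathlib

open scoped InnerProductSpace

noncomputable def uu (d : ℕ) (i : Fin d) : EuclideanSpace ℂ (Fin d) :=
  let a : ℂ := (Real.sqrt ((d : ℝ) / (2 * ((d : ℝ) - 1) ^ 2)) : ℝ)
  let b : ℂ := (Real.sqrt (((d : ℝ) - 2) / (4 * ((d : ℝ) - 1))) : ℝ)
  WithLp.toLp 2 fun j =>
    (if j = i then 0 else a) +
    (if (i : ℕ) + 3 ≤ d then
       (if (j : ℕ) = (i : ℕ) + 1 then Complex.I * b else 0) +
       (if (j : ℕ) = (i : ℕ) + 2 then -(Complex.I * b) else 0)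
     else if (i : ℕ) = d - 2 then
       (if (j : ℕ) = d - 1 then Complex.I * b else 0) +
       (if (j : ℕ) = 0 then -(Complex.I * b) else 0)
     else
       (if (j : ℕ) = 0 then b else 0) + (if (j : ℕ) = 1 then -b else 0))

noncomputable def alph (d : ℕ) : EuclideanSpace ℂ (Fin d) :=
  WithLp.toLp 2 fun _ => ((1 / Real.sqrt d : ℝ) : ℂ)

lemma sum_ind {d k : ℕ} (hk : k < d) (c : ℂ) :
    ∑ j : Fin d, (if (j : ℕ) = k then c else 0) = c := by
  have h : ∀ j : Fin d, ((j : ℕ) = k) = (j = ⟨k, hk⟩) := fun j => by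
    simp [Fin.ext_iff]
  simp only [h]
  simp

lemma sum_indf {d k : ℕ} (hk : k < d) (f : Fin d → ℝ) :
    ∑ i : Fin d, (if (i : ℕ) = k then f i else 0) = f ⟨k, hk⟩ := by
  have h : ∀ i : Fin d, ((i : ℕ) = k) = (i = ⟨k, hk⟩) := fun i => by
    simp [Fin.ext_iff]
  simp only [h]
  simp

lemma uu_sum {d : ℕ} (hd : 3 ≤ d) (i : Fin d) :
    ∑ j, uu d i j = ((((d : ℝ) - 1) * Real.sqrt ((d : ℝ) / (2 * ((d : ℝ) - 1) ^ 2)) : ℝ) : ℂ) := by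
  have h0 : (0 : ℕ) < d := by omega
  have h1 : (1 : ℕ) < d := by omega
  have hd1 : d - 1 < d := by omega
  set A : ℂ := ((Real.sqrt ((d : ℝ) / (2 * ((d : ℝ) - 1) ^ 2)) : ℝ) : ℂ) with hAdef
  simp only [uu, Finset.sum_add_distrib]
  have hsplit : ∀ j : Fin d, (if j = i then (0:ℂ) else A) = A - (if j = i then A else 0) := by
    intro j; split <;> simp
  have hA : ∑ j : Fin d, (if j = i then (0:ℂ) else A)
      = (d : ℂ) * A - A := by
    simp only [hsplit, Finset.sum_sub_distrib, Finset.sum_ite_eq', Finset.mem_univ, if_true,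
      Finset.sum_const, Finset.card_univ, Fintype.card_fin, nsmul_eq_mul]
  rw [hA]
  have hbranch : (∑ j : Fin d,
      (if (i : ℕ) + 3 ≤ d then
        (if (j : ℕ) = (i : ℕ) + 1 then Complex.I * ((Real.sqrt (((d : ℝ) - 2) / (4 * ((d : ℝ) - 1))) : ℝ) : ℂ) else 0) +
        (if (j : ℕ) = (i : ℕ) + 2 then -(Complex.I * ((Real.sqrt (((d : ℝ) - 2) / (4 * ((d : ℝ) - 1))) : ℝ) : ℂ)) else 0)
      else if (i : ℕ) = d - 2 then
        (if (j : ℕ) = d - 1 then Complex.I * ((Real.sqrt (((d : ℝ) - 2) / (4 * ((d : ℝ) - 1))) : ℝ) : ℂ) else 0) +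
        (if (j : ℕ) = 0 then -(Complex.I * ((Real.sqrt (((d : ℝ) - 2) / (4 * ((d : ℝ) - 1))) : ℝ) : ℂ)) else 0)
      else
        (if (j : ℕ) = 0 then ((Real.sqrt (((d : ℝ) - 2) / (4 * ((d : ℝ) - 1))) : ℝ) : ℂ) else 0) +
        (if (j : ℕ) = 1 then -((Real.sqrt (((d : ℝ) - 2) / (4 * ((d : ℝ) - 1))) : ℝ) : ℂ) else 0))) = 0 := by
    by_cases hb1 : (i : ℕ) + 3 ≤ d
    · simp only [if_pos hb1, Finset.sum_add_distrib,
        sum_ind (show (i:ℕ)+1 < d by omega), sum_ind (show (i:ℕ)+2 < d by omega)]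
      ring
    by_cases hb2 : (i : ℕ) = d - 2
    · simp only [if_neg hb1, if_pos hb2, Finset.sum_add_distrib, sum_ind hd1, sum_ind h0]
      ring
    · simp only [if_neg hb1, if_neg hb2, Finset.sum_add_distrib, sum_ind h0, sum_ind h1]
      ring
  rw [hbranch]
  push_cast
  ring

lemma proj_apply {d : ℕ} (hd : 3 ≤ d) (i j : Fin d) :
    (⟪alph d, uu d i⟫_ℂ • alph d) j
      = ((((d : ℝ) - 1) * Real.sqrt ((d : ℝ) / (2 * ((d : ℝ) - 1) ^ 2)) / d : ℝ) : ℂ) := by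
  have hdpos : (0:ℝ) < d := by
    have : (3:ℝ) ≤ (d:ℝ) := by exact_mod_cast hd
    linarith
  have hs : Real.sqrt d ≠ 0 := by positivity
  have h1 : (⟪alph d, uu d i⟫_ℂ • alph d) j = ⟪alph d, uu d i⟫_ℂ * ((1 / Real.sqrt d : ℝ) : ℂ) := rfl
  have h2 : ⟪alph d, uu d i⟫_ℂ = ((1 / Real.sqrt d : ℝ) : ℂ) *
      ((((d : ℝ) - 1) * Real.sqrt ((d : ℝ) / (2 * ((d : ℝ) - 1) ^ 2)) : ℝ) : ℂ) := by
    rw [PiLp.inner_apply]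
    simp only [alph, RCLike.inner_apply, Complex.conj_ofReal, ← Finset.mul_sum]
    rw [← Finset.sum_mul, uu_sum hd i, mul_comm]
  rw [h1, h2]
  rw [← Complex.ofReal_mul, ← Complex.ofReal_mul]
  congr 1
  have key : (1 / Real.sqrt d) * (1 / Real.sqrt d) = 1 / (d:ℝ) := by
    rw [div_mul_div_comm, one_mul, Real.mul_self_sqrt hdpos.le]
  calc 1 / Real.sqrt d * (((d:ℝ) - 1) * Real.sqrt ((d:ℝ) / (2 * ((d:ℝ) - 1) ^ 2))) * (1 / Real.sqrt d)
      = (1 / Real.sqrt d * (1 / Real.sqrt d)) * (((d:ℝ) - 1) * Real.sqrt ((d:ℝ) / (2 * ((d:ℝ) - 1) ^ 2))) := by ring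
    _ = (1 / (d:ℝ)) * (((d:ℝ) - 1) * Real.sqrt ((d:ℝ) / (2 * ((d:ℝ) - 1) ^ 2))) := by rw [key]
    _ = ((d:ℝ) - 1) * Real.sqrt ((d:ℝ) / (2 * ((d:ℝ) - 1) ^ 2)) / d := by ring

lemma uu_im (d : ℕ) (i j : Fin d) :
    (uu d i j).im =
      (if (i : ℕ) + 3 ≤ d then
        (if (j : ℕ) = (i : ℕ) + 1 then Real.sqrt (((d:ℝ)-2)/(4*((d:ℝ)-1))) else 0) +
        (if (j : ℕ) = (i : ℕ) + 2 then -Real.sqrt (((d:ℝ)-2)/(4*((d:ℝ)-1))) else 0)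
      else if (i : ℕ) = d - 2 then
        (if (j : ℕ) = d - 1 then Real.sqrt (((d:ℝ)-2)/(4*((d:ℝ)-1))) else 0) +
        (if (j : ℕ) = 0 then -Real.sqrt (((d:ℝ)-2)/(4*((d:ℝ)-1))) else 0)
      else 0) := by
  simp only [uu, WithLp.ofLp_toLp, Complex.add_im, apply_ite Complex.im, Complex.ofReal_im,
    Complex.zero_im, Complex.neg_im, Complex.mul_im, Complex.I_re, Complex.I_im,
    Complex.ofReal_re, zero_mul, one_mul, zero_add, add_zero, neg_zero, ite_self]

lemma uu_re (d : ℕ) (i j : Fin d) :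
    (uu d i j).re =
      (if j = i then 0 else Real.sqrt ((d : ℝ) / (2 * ((d : ℝ) - 1) ^ 2))) +
      (if (i : ℕ) + 3 ≤ d then 0
       else if (i : ℕ) = d - 2 then 0
       else (if (j : ℕ) = 0 then Real.sqrt (((d:ℝ)-2)/(4*((d:ℝ)-1))) else 0) +
            (if (j : ℕ) = 1 then -Real.sqrt (((d:ℝ)-2)/(4*((d:ℝ)-1))) else 0)) := by
  simp only [uu, WithLp.ofLp_toLp, Complex.add_re, apply_ite Complex.re, Complex.ofReal_re,
    Complex.zero_re, Complex.neg_re, Complex.mul_re, Complex.I_re, Complex.I_im,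
    Complex.ofReal_im, zero_mul, one_mul, mul_zero, zero_sub, neg_zero,
    zero_add, add_zero, ite_self]

theorem stmt5 {d : ℕ} (hd : 3 ≤ d) :
    LinearIndependent ℝ (fun i : Fin d => uu d i - ⟪alph d, uu d i⟫_ℂ • alph d) := by
  set A : ℝ := Real.sqrt ((d : ℝ) / (2 * ((d : ℝ) - 1) ^ 2)) with hAdef
  set B : ℝ := Real.sqrt (((d:ℝ)-2)/(4*((d:ℝ)-1))) with hBdef
  have hdR : (3:ℝ) ≤ (d:ℝ) := by exact_mod_cast hd
  have hApos : 0 < A := Real.sqrt_pos.2 (div_pos (by linarith) (by nlinarith))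
  have hBpos : 0 < B := Real.sqrt_pos.2 (div_pos (by linarith) (by linarith))
  rw [Fintype.linearIndependent_iff]
  intro g hg
  -- coordinate equations
  have hcoord : ∀ j : Fin d, ∑ i : Fin d,
      (g i : ℂ) * (uu d i j - ((((d:ℝ)-1) * A / d : ℝ) : ℂ)) = 0 := by
    intro j
    have h1 : (∑ i, g i • (uu d i - ⟪alph d, uu d i⟫_ℂ • alph d)) j = (0 : EuclideanSpace ℂ (Fin d)) j := by rw [hg]
    rw [WithLp.ofLp_sum, Finset.sum_apply] at h1
    have h2 : ∀ i : Fin d, (g i • (uu d i - ⟪alph d, uu d i⟫_ℂ • alph d)) j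
        = (g i : ℂ) * (uu d i j - ((((d:ℝ)-1) * A / d : ℝ) : ℂ)) := by
      intro i
      have heq : (g i • (uu d i - ⟪alph d, uu d i⟫_ℂ • alph d)) j
          = g i • ((uu d i) j - (⟪alph d, uu d i⟫_ℂ • alph d) j) := rfl
      rw [heq, proj_apply hd, Complex.real_smul]
    simp only [h2] at h1
    simpa using h1
  -- imaginary part equations
  have hIm : ∀ j : Fin d, ∑ i : Fin d, g i * (uu d i j).im = 0 := by
    intro j
    have h1 := congrArg Complex.im (hcoord j)
    rw [Complex.im_sum] at h1
    simpa [Complex.sub_im, Complex.mul_im] using h1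
  -- g at index 0 is zero
  have hg0 : g ⟨0, by omega⟩ = 0 := by
    have h1 := hIm ⟨1, by omega⟩
    have h2 : ∀ i : Fin d, g i * (uu d i ⟨1, by omega⟩).im
        = (if (i : ℕ) = 0 then B * g i else 0) := by
      intro i
      have hi2 := i.2
      rw [uu_im]
      simp only [show ((⟨1, by omega⟩ : Fin d) : ℕ) = 1 from rfl]
      split_ifs <;> first | ring1 | omega | exact absurd trivial (by assumption) | exact (by assumption : False).elim
    rw [Finset.sum_congr rfl (fun i _ => h2 i), sum_indf (show 0 < d by omega)] at h1
    rcases mul_eq_zero.1 h1 with h | h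
    · exact absurd h (ne_of_gt hBpos)
    · exact h
  -- chain equations
  have hchain : ∀ n : ℕ, ∀ _ : n + 2 < d,
      g ⟨n + 1, by omega⟩ = g ⟨n, by omega⟩ := by
    intro n hn
    have h1 := hIm ⟨n + 2, by omega⟩
    have h2 : ∀ i : Fin d, g i * (uu d i ⟨n + 2, by omega⟩).im
        = (if (i : ℕ) = n + 1 then B * g i else 0)
          + (if (i : ℕ) = n then -(B * g i) else 0) := by
      intro i
      have hi2 := i.2
      rw [uu_im]
      simp only [show ((⟨n + 2, by omega⟩ : Fin d) : ℕ) = n + 2 from rfl]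
      split_ifs <;> first | ring1 | omega | exact absurd trivial (by assumption) | exact (by assumption : False).elim
    rw [Finset.sum_congr rfl (fun i _ => h2 i), Finset.sum_add_distrib,
      sum_indf (show n + 1 < d by omega), sum_indf (show n < d by omega)] at h1
    have h3 : B * (g ⟨n + 1, by omega⟩ - g ⟨n, by omega⟩) = 0 := by linarith [h1]
    rcases mul_eq_zero.1 h3 with h | h
    · exact absurd h (ne_of_gt hBpos)
    · linarith [h]
  -- all coordinates below d-1 vanish
  have hsmall : ∀ n : ℕ, ∀ hn : n < d - 1, g ⟨n, by omega⟩ = 0 := by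
    intro n
    induction n with
    | zero => intro _; exact hg0
    | succ m ih =>
      intro hn
      have h1 := hchain m (by omega)
      rw [h1]
      exact ih (by omega)
  -- finish with real part at coordinate 0
  have hlast : g ⟨d - 1, by omega⟩ = 0 := by
    have h1 := hcoord ⟨0, by omega⟩
    have h2 : ∀ i : Fin d, i ≠ ⟨d - 1, by omega⟩ →
        (g i : ℂ) * (uu d i ⟨0, by omega⟩ - ((((d:ℝ)-1) * A / d : ℝ) : ℂ)) = 0 := by
      intro i hi
      have : g i = 0 := by
        have hi2 := i.2
        have hne : (i : ℕ) ≠ d - 1 := fun h => hi (Fin.ext h)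
        have := hsmall (i : ℕ) (by omega)
        simpa [Fin.eta] using this
      rw [this]
      simp
    rw [Finset.sum_eq_single ⟨d - 1, by omega⟩ (fun b _ hb => h2 b hb)
      (fun h => absurd (Finset.mem_univ _) h)] at h1
    have hval : uu d ⟨d - 1, by omega⟩ ⟨0, by omega⟩ = ((A + B : ℝ) : ℂ) := by
      show (if (⟨0, by omega⟩ : Fin d) = ⟨d - 1, by omega⟩ then (0:ℂ) else ((A:ℝ):ℂ)) +
        (if (d:ℕ) - 1 + 3 ≤ d then _ else if (d:ℕ) - 1 = d - 2 then _
         else (if (0:ℕ) = 0 then ((B:ℝ):ℂ) else 0) + (if (0:ℕ) = 1 then -((B:ℝ):ℂ) else 0)) = _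
      rw [if_neg (by simp only [Fin.ext_iff]; omega : ¬ (⟨0, by omega⟩ : Fin d) = ⟨d - 1, by omega⟩),
        if_neg (by omega : ¬ (d:ℕ) - 1 + 3 ≤ d), if_neg (by omega : ¬ (d:ℕ) - 1 = d - 2),
        if_pos rfl, if_neg (by omega : ¬ (0:ℕ) = 1)]
      push_cast
      ring
    rw [hval, ← Complex.ofReal_sub, ← Complex.real_smul] at h1
    rcases smul_eq_zero.1 h1 with h | h
    · exact h
    · exfalso
      have hABpos : 0 < A + B - ((d:ℝ)-1) * A / d := by
        have : ((d:ℝ)-1) * A / d = A - A / d := by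
          field_simp
        rw [this]
        have : 0 < A / d := by positivity
        linarith
      rw [Complex.ofReal_eq_zero] at h
      linarith
  intro i
  by_cases hi : (i : ℕ) = d - 1
  · have : i = ⟨d - 1, by omega⟩ := Fin.ext hi
    rw [this]; exact hlast
  · have hi2 := i.2
    have := hsmall (i : ℕ) (by omega)
    simpa [Fin.eta] using this
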